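/- There is a Tukey morphism from (ω^ω, ≤*) to (nwd, ⊆^N): there exist maps Ψ₋ : ω^ω → nwd and Ψ₊ : nwd → ω^ω such that whenever Ψ₋(f) \ A has Lebesgue measure zero, then f(n) ≤ Ψ₊(A)(n) for all n. Consequently, cof_N(nwd) ≥ 𝔡. -/

import Mathlib

open Cardinal Set MeasureTheory Filter Metric
open scoped ENNReal

/-- The dominating number 𝔡. -/
noncomputable def dominatingNumber : Cardinal :=
  sInf {c | ∃ D : Set (ℕ → ℕ), Cardinal.mk D = c ∧
    ∀ f : ℕ → ℕ, ∃ g ∈ D, ∀ᶠ n in atTop, f n ≤ g n}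

/-- `relCof J I`: least cardinality of a family `𝒜 ⊆ I` such that
every `I₀ ∈ I` satisfies `I₀ \ A ∈ J` for some `A ∈ 𝒜`. -/
noncomputable def relCof {X : Type*} (J I : Set (Set X)) : Cardinal :=
  sInf {c | ∃ 𝒜 : Set (Set X), 𝒜 ⊆ I ∧ Cardinal.mk 𝒜 = c ∧
    ∀ I₀ ∈ I, ∃ A ∈ 𝒜, I₀ \ A ∈ J}

namespace S18
noncomputable def q : ℕ → ℝ := TopologicalSpace.denseSeq ℝ

noncomputable def U (k : ℕ) : Set ℝ := ⋃ i, ball (q i) ((2:ℝ)⁻¹ ^ (k + i + 1))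

lemma isOpen_U (k : ℕ) : IsOpen (U k) := isOpen_iUnion fun _ => isOpen_ball

lemma dense_U (k : ℕ) : Dense (U k) := by
  refine Dense.mono ?_ (TopologicalSpace.denseRange_denseSeq ℝ)
  rintro x ⟨i, rfl⟩
  exact mem_iUnion.2 ⟨i, mem_ball_self (by positivity)⟩

lemma antitone_U : Antitone U := by
  intro k l hkl x hx
  obtain ⟨i, hi⟩ := mem_iUnion.1 hx
  refine mem_iUnion.2 ⟨i, ball_subset_ball ?_ hi⟩
  exact pow_le_pow_of_le_one (by norm_num) (by norm_num) (by omega)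

lemma volume_U_le (k : ℕ) : volume (U k) ≤ (2:ℝ≥0∞)⁻¹ ^ k * 2 := by
  calc volume (U k) ≤ ∑' i, volume (ball (q i) ((2:ℝ)⁻¹ ^ (k + i + 1))) :=
        measure_iUnion_le _
    _ = ∑' i : ℕ, ENNReal.ofReal (2 * (2:ℝ)⁻¹ ^ (k + i + 1)) := by
        simp [Real.volume_ball]
    _ = ∑' i : ℕ, (2:ℝ≥0∞) * (2:ℝ≥0∞)⁻¹ ^ (k + i + 1) := by
        congr 1; funext i
        rw [ENNReal.ofReal_mul (by norm_num), ENNReal.ofReal_pow (by norm_num),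
          ENNReal.ofReal_inv_of_pos (by norm_num)]
        norm_num
    _ = ∑' i : ℕ, (2:ℝ≥0∞)⁻¹ ^ k * (2:ℝ≥0∞)⁻¹ ^ i := by
        congr 1; funext i
        rw [pow_succ, pow_add, ← mul_assoc, mul_comm (2:ℝ≥0∞), mul_assoc,
          ENNReal.mul_inv_cancel (by norm_num) (by norm_num), mul_one]
    _ = (2:ℝ≥0∞)⁻¹ ^ k * 2 := by
        rw [ENNReal.tsum_mul_left, ENNReal.tsum_geometric, ENNReal.one_sub_inv_two]
        norm_num

lemma volume_iInter_U : volume (⋂ k, U k) = 0 := by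
  have h : ∀ k : ℕ, volume (⋂ j, U j) ≤ (2:ℝ≥0∞)⁻¹ ^ k * 2 :=
    fun k => (measure_mono (iInter_subset _ k)).trans (volume_U_le k)
  have ht : Tendsto (fun k : ℕ => (2:ℝ≥0∞)⁻¹ ^ k * 2) atTop (nhds 0) := by
    have := ENNReal.tendsto_pow_atTop_nhds_zero_of_lt_one
      (by norm_num : (2:ℝ≥0∞)⁻¹ < 1)
    simpa using ENNReal.Tendsto.mul_const this (Or.inr (by norm_num))
  exact le_antisymm (ge_of_tendsto' ht h) (zero_le)

/-- Endpoints of the intervals. -/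
noncomputable def a (n : ℕ) : ℝ := ((n:ℝ) + 1)⁻¹

lemma a_pos (n : ℕ) : 0 < a n := by
  unfold a; positivity

lemma a_le_one (n : ℕ) : a n ≤ 1 := by
  rw [a, inv_le_one_iff₀]; right; linarith [Nat.cast_nonneg (α := ℝ) n]

lemma a_anti : StrictAnti a := by
  intro m n hmn
  apply inv_strictAnti₀ (by positivity)
  have : (m:ℝ) < n := by exact_mod_cast hmn
  linarith

/-- The intervals. -/
noncomputable def J (n : ℕ) : Set ℝ := Ioo (a (n+1)) (a n)

lemma J_subset (n : ℕ) : J n ⊆ Icc (0:ℝ) 1 := fun x hx =>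
  ⟨le_trans (a_pos (n+1)).le hx.1.le, hx.2.le.trans (a_le_one n)⟩

lemma J_disjoint {m n : ℕ} (h : m ≠ n) : J m ∩ J n = ∅ := by
  ext x; simp only [J, mem_inter_iff, mem_Ioo, mem_empty_iff_false, iff_false]
  rintro ⟨⟨h1, h2⟩, ⟨h3, h4⟩⟩
  rcases lt_or_gt_of_ne h with hlt | hlt
  · linarith [a_anti.antitone (show m + 1 ≤ n from hlt)]
  · linarith [a_anti.antitone (show n + 1 ≤ m from hlt)]

lemma isOpen_J (n : ℕ) : IsOpen (J n) := isOpen_Ioo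

lemma a_succ_lt (n : ℕ) : a (n+1) < a n := a_anti (by omega)

lemma J_nonempty (n : ℕ) : ∃ t, t ∈ J n := ⟨(a (n+1) + a n)/2, by
  rw [J, Set.mem_Ioo]; constructor <;> linarith [a_succ_lt n]⟩

/-- Any subinterval of `[0,1]` contains a subinterval of some `J n`. -/
lemma exists_subinterval {c d : ℝ} (hc : 0 ≤ c) (hcd : c < d) (hd : d ≤ 1) :
    ∃ c' d' n, c' < d' ∧ Ioo c' d' ⊆ Ioo c d ∧ Ioo c' d' ⊆ J n := by
  set t := (c + d)/2 with ht
  have htc : c < t := by rw [ht]; linarith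
  have htd : t < d := by rw [ht]; linarith
  have ht0 : 0 < t := lt_of_le_of_lt hc htc
  have ht1 : t < 1 := lt_of_lt_of_le htd hd
  have hP : ∃ m : ℕ, a (m+1) < t := by
    obtain ⟨m, hm⟩ := exists_nat_gt (t⁻¹)
    refine ⟨m, ?_⟩
    rw [a]
    rw [inv_lt_comm₀ (by positivity) ht0]
    calc t⁻¹ < m := hm
      _ ≤ ((m+1:ℕ):ℝ) + 1 := by push_cast; linarith
  set n := Nat.find hP with hn
  have hfind : a (n+1) < t := Nat.find_spec hP
  have htan : t ≤ a n := by
    rcases Nat.eq_zero_or_pos n with h0 | h0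
    · rw [h0]
      have : a 0 = 1 := by rw [a]; norm_num
      rw [this]; exact ht1.le
    · have hmin := Nat.find_min hP (m := n - 1) (by omega)
      rw [show n - 1 + 1 = n by omega] at hmin
      exact not_lt.1 hmin
  refine ⟨max c (a (n+1)), t, n, ?_, ?_, ?_⟩
  · exact max_lt htc hfind
  · rintro y ⟨hy1, hy2⟩
    exact ⟨lt_of_le_of_lt (le_max_left _ _) hy1, hy2.trans htd⟩
  · rintro y ⟨hy1, hy2⟩
    exact ⟨lt_of_le_of_lt (le_max_right _ _) hy1, lt_of_lt_of_le hy2 htan⟩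

/-- Locality: inside the open interval `J n`, the closure of a union of pieces
`S m ⊆ J m` only sees the `n`-th piece. -/
lemma mem_closure_piece {S : ℕ → Set ℝ} (hS : ∀ m, S m ⊆ J m) {n : ℕ} {x : ℝ}
    (hx : x ∈ J n) (h : x ∈ closure (⋃ m, S m)) : x ∈ closure (S n) := by
  rw [_root_.mem_closure_iff] at h ⊢
  intro O hO hxO
  obtain ⟨y, hy⟩ := h (O ∩ J n) (hO.inter (isOpen_J n)) ⟨hxO, hx⟩
  obtain ⟨m, hym⟩ := mem_iUnion.1 hy.2
  have hmn : m = n := by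
    by_contra hne
    have : y ∈ J m ∩ J n := ⟨hS m hym, hy.1.2⟩
    rw [J_disjoint hne] at this
    exact this
  exact ⟨y, hy.1.1, hmn ▸ hym⟩

/-- The minus side of the Tukey morphism, as a subset of `ℝ`. -/
noncomputable def T (f : ℕ → ℕ) : Set ℝ := ⋃ n, (J n \ U (f n))

lemma T_subset (f : ℕ → ℕ) : T f ⊆ Icc (0:ℝ) 1 := by
  rintro x hx
  obtain ⟨n, hn⟩ := mem_iUnion.1 hx
  exact J_subset n hn.1

lemma T_nwd (f : ℕ → ℕ) : interior (closure (T f)) = ∅ := by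
  by_contra hne
  obtain ⟨x, hx⟩ := nonempty_iff_ne_empty.2 hne
  have hTcl : closure (T f) ⊆ Icc (0:ℝ) 1 := closure_minimal (T_subset f) isClosed_Icc
  obtain ⟨ε, hε, hball⟩ := Metric.mem_nhds_iff.1 (mem_interior_iff_mem_nhds.1 hx)
  have hball' : Ioo (x - ε) (x + ε) ⊆ closure (T f) := by
    rw [← Real.ball_eq_Ioo]; exact hball
  have hx01 : x ∈ Icc (0:ℝ) 1 := hTcl (hball' ⟨by linarith, by linarith⟩)
  obtain ⟨c', d', n, hcd', hsub1, hsub2⟩ :=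
    exists_subinterval (c := max 0 (x - ε)) (d := min 1 (x + ε)) (le_max_left _ _)
      (max_lt (lt_min (by norm_num) (by nlinarith [hx01.1]))
        (lt_min (by nlinarith [hx01.2]) (by linarith)))
      (min_le_left _ _)
  have hsub : Ioo c' d' ⊆ closure (T f) := fun y hy => by
    have h2 := hsub1 hy
    exact hball' ⟨lt_of_le_of_lt (le_max_right 0 (x - ε)) h2.1,
      lt_of_lt_of_le h2.2 (min_le_right 1 (x + ε))⟩
  -- pick a point of `U (f n)` inside `Ioo c' d'`
  obtain ⟨z, hz⟩ := dense_iff_inter_open.1 (dense_U (f n)) (Ioo c' d') isOpen_Ioo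
    ⟨(c' + d')/2, by rw [Set.mem_Ioo]; constructor <;> linarith⟩
  have hzJ : z ∈ J n := hsub2 hz.1
  have hzcl : z ∈ closure (J n \ U (f n)) :=
    mem_closure_piece (S := fun m => J m \ U (f m)) (fun m => diff_subset) hzJ (hsub hz.1)
  have : z ∈ (U (f n))ᶜ :=
    closure_minimal (diff_subset_compl _ _) (isOpen_U (f n)).isClosed_compl hzcl
  exact this hz.2

abbrev X := Set.Icc (0:ℝ) 1

/-- Transfer of nowhere-density from `ℝ` to the subtype `[0,1]`. -/
lemma nwd_transfer {T : Set ℝ} (hT : interior (closure T) = ∅) :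
    IsNowhereDense ((Subtype.val : X → ℝ) ⁻¹' T) := by
  rw [IsNowhereDense]
  have hcl : closure ((Subtype.val : X → ℝ) ⁻¹' T)
      ⊆ (Subtype.val : X → ℝ) ⁻¹' (closure T) :=
    Continuous.closure_preimage_subset continuous_subtype_val T
  have hint : interior ((Subtype.val : X → ℝ) ⁻¹' (closure T)) = ∅ := by
    rw [eq_empty_iff_forall_notMem]
    intro x hx
    obtain ⟨ε, hε, hball⟩ := Metric.mem_nhds_iff.1 (mem_interior_iff_mem_nhds.1 hx)
    set c := max 0 ((x:ℝ) - ε) with hc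
    set d := min 1 ((x:ℝ) + ε) with hd
    have hx0 : (0:ℝ) ≤ x := x.2.1
    have hx1 : (x:ℝ) ≤ 1 := x.2.2
    have hcd : c < d := max_lt (lt_min (by norm_num) (by linarith))
      (lt_min (by linarith) (by linarith))
    have hIoo : Ioo c d ⊆ closure T := by
      intro y hy
      have hy01 : y ∈ Set.Icc (0:ℝ) 1 :=
        ⟨(le_max_left 0 _).trans hy.1.le, hy.2.le.trans (min_le_left 1 _)⟩
      have hyb : (⟨y, hy01⟩ : X) ∈ Metric.ball x ε := by
        rw [Metric.mem_ball, Subtype.dist_eq, Real.dist_eq]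
        have hyy : ((⟨y, hy01⟩ : X) : ℝ) = y := rfl
        rw [hyy, abs_lt]
        constructor
        · have := lt_of_le_of_lt (le_max_right 0 _) hy.1; linarith
        · have := lt_of_lt_of_le hy.2 (min_le_right 1 _); linarith
      exact hball hyb
    have : Ioo c d ⊆ interior (closure T) := interior_maximal hIoo isOpen_Ioo
    rw [hT] at this
    have hmem : (c+d)/2 ∈ Ioo c d := by rw [Set.mem_Ioo]; constructor <;> linarith
    exact this hmem
  exact eq_empty_of_subset_empty ((interior_mono hcl).trans hint.le)

lemma volume_preimage_diff (T : Set ℝ) (hT : T ⊆ Set.Icc (0:ℝ) 1) (A : Set X) :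
    volume ((Subtype.val : X → ℝ) ⁻¹' T \ A) = volume (T \ (Subtype.val '' A)) := by
  have hemb : MeasurableEmbedding (Subtype.val : X → ℝ) :=
    MeasurableEmbedding.subtype_coe measurableSet_Icc
  calc volume ((Subtype.val : X → ℝ) ⁻¹' T \ A)
      = volume (Subtype.val '' ((Subtype.val : X → ℝ) ⁻¹' T \ A)) := hemb.comap_apply _ _
    _ = volume (T \ (Subtype.val '' A)) := by
        rw [image_diff Subtype.coe_injective, image_preimage_eq_inter_range,
          Subtype.range_coe, inter_eq_self_of_subset_left hT]

/-- If every scale misses a nowhere dense set `A` only on a null set, contradiction. -/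
lemma exists_scale (A : Set X) (hA : IsNowhereDense A) (n : ℕ) :
    ∃ k, volume ((Subtype.val : X → ℝ) ⁻¹' (J n \ U k) \ A) ≠ 0 := by
  by_contra hall
  push_neg at hall
  set B := (Subtype.val : X → ℝ) '' A with hB
  have hall' : ∀ k, volume ((J n \ U k) \ B) = 0 := fun k => by
    rw [← volume_preimage_diff _ (fun x hx => J_subset n hx.1) A]; exact hall k
  -- hence J n \ B is null
  have hJB : volume (J n \ B) = 0 := by
    have hsub : J n \ B ⊆ (⋂ k, U k) ∪ ⋃ k, ((J n \ U k) \ B) := by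
      intro x hx
      by_cases hxU : ∀ k, x ∈ U k
      · exact Or.inl (mem_iInter.2 hxU)
      · push_neg at hxU
        obtain ⟨k, hk⟩ := hxU
        exact Or.inr (mem_iUnion.2 ⟨k, ⟨hx.1, hk⟩, hx.2⟩)
    refine le_antisymm ?_ (zero_le)
    calc volume (J n \ B) ≤ volume ((⋂ k, U k) ∪ ⋃ k, ((J n \ U k) \ B)) :=
          measure_mono hsub
      _ ≤ volume (⋂ k, U k) + volume (⋃ k, ((J n \ U k) \ B)) := measure_union_le _ _
      _ ≤ 0 + ∑' k, volume ((J n \ U k) \ B) := by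
          rw [volume_iInter_U]
          exact add_le_add le_rfl (measure_iUnion_le _)
      _ = 0 := by simp [hall']
  -- hence J n ⊆ closure B
  have hJcl : J n ⊆ closure B := by
    intro t ht
    rw [_root_.mem_closure_iff]
    intro O hO htO
    by_contra hOB
    rw [not_nonempty_iff_eq_empty] at hOB
    have hpos : 0 < volume (O ∩ J n) :=
      (hO.inter (isOpen_J n)).measure_pos volume ⟨t, htO, ht⟩
    have : O ∩ J n ⊆ J n \ B := fun y hy =>
      ⟨hy.2, fun hyB => (eq_empty_iff_forall_notMem.1 hOB y) ⟨hy.1, hyB⟩⟩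
    exact absurd (le_antisymm ((measure_mono this).trans hJB.le) (zero_le)) hpos.ne'
  -- contradiction with nowhere density of A
  have hclA : (Subtype.val : X → ℝ) ⁻¹' (J n) ⊆ closure A := by
    rw [Topology.IsEmbedding.subtypeVal.closure_eq_preimage_closure_image A]
    exact fun x hx => hJcl hx
  obtain ⟨t, htJ⟩ := J_nonempty n
  have ht01 : t ∈ Set.Icc (0:ℝ) 1 := J_subset n htJ
  have : (⟨t, ht01⟩ : X) ∈ interior (closure A) :=
    interior_maximal hclA (continuous_subtype_val.isOpen_preimage _ (isOpen_J n)) htJ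
  rw [hA] at this
  exact this

/-- The Tukey morphism. -/
lemma key : ∃ Ψm : (ℕ → ℕ) → Set X, ∃ Ψp : Set X → (ℕ → ℕ),
    (∀ f, IsNowhereDense (Ψm f)) ∧
    ∀ f : ℕ → ℕ, ∀ A : Set X, IsNowhereDense A →
      volume (Ψm f \ A) = 0 → ∀ n, f n ≤ Ψp A n := by
  classical
  refine ⟨fun f => (Subtype.val : X → ℝ) ⁻¹' T f,
    fun A => if h : IsNowhereDense A then fun n => Nat.find (exists_scale A h n)
      else fun _ => 0,
    fun f => nwd_transfer (T_nwd f), ?_⟩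
  intro f A hA h0 n
  simp only [dif_pos hA]
  refine le_of_lt ((Nat.lt_find_iff (exists_scale A hA n) (f n)).2 ?_)
  intro j hj hnz
  refine hnz (measure_mono_null ?_ h0)
  rintro x ⟨hx1, hx2⟩
  refine ⟨mem_iUnion.2 ⟨n, hx1.1, fun hU => hx1.2 (antitone_U hj hU)⟩, hx2⟩
end S18

open S18 in
theorem stmt18 :
    (∃ Ψm : (ℕ → ℕ) → Set (Set.Icc (0:ℝ) 1),
      ∃ Ψp : Set (Set.Icc (0:ℝ) 1) → (ℕ → ℕ),
      (∀ f, IsNowhereDense (Ψm f)) ∧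
      ∀ f : ℕ → ℕ, ∀ A : Set (Set.Icc (0:ℝ) 1), IsNowhereDense A →
        volume (Ψm f \ A) = 0 → ∀ n, f n ≤ Ψp A n) ∧
    dominatingNumber ≤
      relCof {A : Set (Set.Icc (0:ℝ) 1) | volume A = 0}
        {A : Set (Set.Icc (0:ℝ) 1) | IsNowhereDense A} := by
  obtain ⟨Ψm, Ψp, hnwd, hdom⟩ := key
  refine ⟨⟨Ψm, Ψp, hnwd, hdom⟩, ?_⟩
  rw [relCof]
  apply le_csInf
  · exact ⟨_, {A : Set X | IsNowhereDense A}, Subset.rfl, rfl,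
      fun I₀ hI₀ => ⟨I₀, hI₀, by simp⟩⟩
  · rintro c ⟨𝒜, h𝒜sub, h𝒜mk, h𝒜cov⟩
    have h1 : dominatingNumber ≤ Cardinal.mk (Ψp '' 𝒜) := by
      rw [dominatingNumber]
      apply csInf_le'
      refine ⟨Ψp '' 𝒜, rfl, fun f => ?_⟩
      obtain ⟨A, hA𝒜, hAnull⟩ := h𝒜cov (Ψm f) (hnwd f)
      exact ⟨Ψp A, mem_image_of_mem _ hA𝒜,
        Eventually.of_forall (hdom f A (h𝒜sub hA𝒜) hAnull)⟩
    exact h1.trans (h𝒜mk ▸ Cardinal.mk_image_le)
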